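/- Let G be a connected simple graph on [n] which is closed with respect to the given labeling. Then {i, i+1} is an edge of G for every i with 1 ≤ i ≤ n-1. -/

import Mathlib

/-- A simple graph on `Fin n` is *closed with respect to the given labeling*. -/
def SimpleGraph.IsClosed {n : ℕ} (G : SimpleGraph (Fin n)) : Prop :=
  ∀ ⦃i j k l : Fin n⦄, G.Adj i j → G.Adj k l → i < j → k < l →
    (i = k → j ≠ l → G.Adj j l) ∧ (j = l → i ≠ k → G.Adj i k)

section Aux

variable {n : ℕ} {G : SimpleGraph (Fin n)}

/-- An increasing walk goes weakly up. -/
lemma chain_lt_le {u v : Fin n} (p : G.Walk u v)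
    (h : List.Chain' (· < ·) p.support) : u ≤ v := by
  induction p with
  | nil => exact le_refl _
  | @cons a x b hadj q ih =>
    rw [SimpleGraph.Walk.support_cons, q.support_eq_cons, List.Chain', List.isChain_cons_cons] at h
    have hq : List.Chain' (· < ·) q.support := by
      rw [q.support_eq_cons]; exact h.2
    exact le_of_lt (lt_of_lt_of_le h.1 (ih hq))

/-- A decreasing walk goes weakly down. -/
lemma chain_gt_ge {u v : Fin n} (p : G.Walk u v)
    (h : List.Chain' (· > ·) p.support) : v ≤ u := by
  induction p with
  | nil => exact le_refl _
  | @cons a x b hadj q ih =>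
    rw [SimpleGraph.Walk.support_cons, q.support_eq_cons, List.Chain', List.isChain_cons_cons] at h
    have hq : List.Chain' (· > ·) q.support := by
      rw [q.support_eq_cons]; exact h.2
    exact le_of_lt (lt_of_le_of_lt (ih hq) h.1)

/-- A non-monotone walk in a closed graph can be shortened. -/
lemma exists_shorter (hG : G.IsClosed) {u v : Fin n} (p : G.Walk u v)
    (h1 : ¬ List.Chain' (· < ·) p.support) (h2 : ¬ List.Chain' (· > ·) p.support) :
    ∃ q : G.Walk u v, q.length < p.length := by
  induction p with
  | nil => exact absurd (by simp [List.Chain']) h1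
  | @cons a x b hadj q ih =>
    cases q with
    | nil =>
      exfalso
      rcases lt_or_gt_of_ne hadj.ne with hlt | hgt
      · exact h1 (by simp [hlt, List.Chain'])
      · exact h2 (by simp [hgt, List.Chain'])
    | @cons x y b hadj' r =>
      by_cases hya : y = a
      · refine ⟨r.copy hya rfl, ?_⟩
        rw [SimpleGraph.Walk.length_copy]
        simp [SimpleGraph.Walk.length_cons]
      · rcases lt_or_gt_of_ne hadj.ne with hax | hxa
        · rcases lt_or_gt_of_ne hadj'.ne with hxy | hyx
          · -- a < x < y : monotone at head, recurse on tail
            have t1 : ¬ List.Chain' (· < ·) (SimpleGraph.Walk.cons hadj' r).support := by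
              intro hc
              apply h1
              rw [SimpleGraph.Walk.support_cons (h := hadj),
                (SimpleGraph.Walk.cons hadj' r).support_eq_cons, List.Chain', List.isChain_cons_cons]
              refine ⟨hax, ?_⟩
              rw [← (SimpleGraph.Walk.cons hadj' r).support_eq_cons]
              exact hc
            have t2 : ¬ List.Chain' (· > ·) (SimpleGraph.Walk.cons hadj' r).support := by
              intro hc
              rw [SimpleGraph.Walk.support_cons, r.support_eq_cons, List.Chain', List.isChain_cons_cons] at hc
              exact absurd hc.1 (not_lt.mpr (le_of_lt hxy))
            obtain ⟨t', ht'⟩ := ih t1 t2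
            refine ⟨SimpleGraph.Walk.cons hadj t', ?_⟩
            simp only [SimpleGraph.Walk.length_cons] at ht' ⊢
            omega
          · -- a < x, y < x : local max, chord
            have hay : G.Adj a y :=
              (hG hadj hadj'.symm hax hyx).2 rfl (fun e => hya e.symm)
            exact ⟨SimpleGraph.Walk.cons hay r, by
              simp only [SimpleGraph.Walk.length_cons]; omega⟩
        · rcases lt_or_gt_of_ne hadj'.ne with hxy | hyx
          · -- x < a, x < y : local min, chord
            have hay : G.Adj a y :=
              (hG hadj.symm hadj' hxa hxy).1 rfl (fun e => hya e.symm)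
            exact ⟨SimpleGraph.Walk.cons hay r, by
              simp only [SimpleGraph.Walk.length_cons]; omega⟩
          · -- a > x > y : monotone at head, recurse on tail
            have t2 : ¬ List.Chain' (· > ·) (SimpleGraph.Walk.cons hadj' r).support := by
              intro hc
              apply h2
              rw [SimpleGraph.Walk.support_cons (h := hadj),
                (SimpleGraph.Walk.cons hadj' r).support_eq_cons, List.Chain', List.isChain_cons_cons]
              refine ⟨hxa, ?_⟩
              rw [← (SimpleGraph.Walk.cons hadj' r).support_eq_cons]
              exact hc
            have t1 : ¬ List.Chain' (· < ·) (SimpleGraph.Walk.cons hadj' r).support := by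
              intro hc
              rw [SimpleGraph.Walk.support_cons, r.support_eq_cons, List.Chain', List.isChain_cons_cons] at hc
              exact absurd hc.1 (not_lt.mpr (le_of_lt hyx))
            obtain ⟨t', ht'⟩ := ih t1 t2
            refine ⟨SimpleGraph.Walk.cons hadj t', ?_⟩
            simp only [SimpleGraph.Walk.length_cons] at ht' ⊢
            omega

/-- In a closed graph, any walk can be replaced by a monotone walk. -/
lemma exists_mono (hG : G.IsClosed) {u v : Fin n} (p : G.Walk u v) :
    ∃ q : G.Walk u v,
      List.Chain' (· < ·) q.support ∨ List.Chain' (· > ·) q.support := by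
  generalize hL : p.length = L
  induction L using Nat.strong_induction_on generalizing p with
  | _ L ih =>
    by_cases h1 : List.Chain' (· < ·) p.support
    · exact ⟨p, Or.inl h1⟩
    by_cases h2 : List.Chain' (· > ·) p.support
    · exact ⟨p, Or.inr h2⟩
    obtain ⟨q, hq⟩ := exists_shorter hG p h1 h2
    exact ih q.length (hL ▸ hq) q rfl

lemma adj_of_inc_walk {u v : Fin n} (p : G.Walk u v)
    (hmono : List.Chain' (· < ·) p.support) (huv : (v : ℕ) = (u : ℕ) + 1) :
    G.Adj u v := by
  cases p with
  | nil => omega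
  | @cons _ x _ hadj q =>
    rw [SimpleGraph.Walk.support_cons, q.support_eq_cons, List.Chain', List.isChain_cons_cons] at hmono
    have hq : List.Chain' (· < ·) q.support := by
      rw [q.support_eq_cons]; exact hmono.2
    have hxb : x ≤ v := chain_lt_le q hq
    have : x = v := by
      apply Fin.ext
      have h1 : (u : ℕ) < (x : ℕ) := hmono.1
      have h2 : (x : ℕ) ≤ (v : ℕ) := hxb
      omega
    rwa [← this]

end Aux

/-- If `G` is a connected graph on `[n]` which is closed with respect to the given
labeling, then `{i, i+1}` is an edge of `G` for every `1 ≤ i ≤ n-1`. -/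
theorem adj_succ_of_closed_connected {n : ℕ} (G : SimpleGraph (Fin n))
    (hconn : G.Connected) (hG : G.IsClosed) :
    ∀ i : ℕ, (h : i + 1 < n) → G.Adj ⟨i, Nat.lt_of_succ_lt h⟩ ⟨i + 1, h⟩ := by
  intro i h
  set u : Fin n := ⟨i, Nat.lt_of_succ_lt h⟩ with hu
  set v : Fin n := ⟨i + 1, h⟩ with hv
  obtain ⟨p⟩ := hconn.preconnected u v
  obtain ⟨q, hq | hq⟩ := exists_mono hG p
  · exact adj_of_inc_walk q hq (by simp [hu, hv])
  · exfalso
    have := chain_gt_ge q hq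
    have : (v : ℕ) ≤ (u : ℕ) := this
    simp [hu, hv] at this
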